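/- arXiv:2211.04836 — 7 statements merged into one kernel-verified Lean document; each statement's English description precedes it below -/
import Mathlib

section
/- Let G be a connected graph with n vertices and let v be a vertex of degree at least 3. Suppose P = u v_1 v_2 ⋯ v_{x-1} v is a pendant path attached at v (so deg(u)=1, the internal vertices v_1,...,v_{x-1} have degree 2 in G, and the path has x edges) with x < n/2. Then Tr_G(v_{x-1}) - Tr_G(v) = n - 2x. -/
/-- The transmission of a vertex: sum of distances to all other vertices. -/
noncomputable def transmission {V : Type*} [Fintype V] (G : SimpleGraph V) (v : V) : ℕ :=
  ∑ u : V, G.dist v u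

private lemma firststep {V : Type*} {G : SimpleGraph V} (hconn : G.Connected)
    (a w : V) (hne : a ≠ w) : ∃ z, G.Adj a z ∧ G.dist a w = G.dist z w + 1 := by
  obtain ⟨W, hW⟩ := hconn.exists_walk_length_eq_dist a w
  cases W with
  | nil => exact absurd rfl hne
  | cons h q =>
    refine ⟨_, h, ?_⟩
    have h1 : G.dist _ w ≤ q.length := SimpleGraph.dist_le q
    rename_i z
    have h2 : G.dist a w ≤ G.dist a z + G.dist z w := hconn.dist_triangle
    have h3 : G.dist a z = 1 := SimpleGraph.dist_eq_one_iff_adj.mpr h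
    have h4 : (SimpleGraph.Walk.cons h q).length = q.length + 1 := by
      simp [SimpleGraph.Walk.length_cons]
    omega

/-- If `P = u v₁ v₂ ⋯ v_{x-1} v` is a pendant path of length `x < n/2` attached at a
vertex `v` of degree at least 3 in a connected graph of order `n`, then
`Tr(v_{x-1}) - Tr(v) = n - 2x`.  Here `p i` is the `i`-th vertex on the path,
with `p 0 = u` the leaf and `p x = v`. -/
theorem stmt_3 {V : Type*} [Fintype V] (G : SimpleGraph V) [DecidableRel G.Adj]
    (hconn : G.Connected) (n x : ℕ) (hn : Fintype.card V = n) (hx1 : 1 ≤ x)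
    (p : ℕ → V)
    (hinj : ∀ i ≤ x, ∀ j ≤ x, p i = p j → i = j)
    (hadj : ∀ i < x, G.Adj (p i) (p (i + 1)))
    (hleaf : G.degree (p 0) = 1)
    (hdeg2 : ∀ i, 1 ≤ i → i ≤ x - 1 → G.degree (p i) = 2)
    (hdegv : 3 ≤ G.degree (p x))
    (hx : 2 * x < n) :
    (transmission G (p (x - 1)) : ℤ) - transmission G (p x) = n - 2 * x := by
  classical
  -- neighbors of the leaf
  have nbr0 : ∀ z, G.Adj (p 0) z → z = p 1 := by
    intro z hz
    have h1 : p 1 ∈ G.neighborFinset (p 0) := by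
      simpa using hadj 0 (by omega)
    have hzmem : z ∈ G.neighborFinset (p 0) := by simpa using hz
    have hcard : (G.neighborFinset (p 0)).card ≤ 1 := by
      rw [G.card_neighborFinset_eq_degree, hleaf]
    exact Finset.card_le_one.mp hcard z hzmem (p 1) h1
  -- neighbors of internal vertices
  have nbr : ∀ i, 1 ≤ i → i < x → ∀ z, G.Adj (p i) z → z = p (i - 1) ∨ z = p (i + 1) := by
    intro i h1 h2 z hz
    have hzmem : z ∈ G.neighborFinset (p i) := by simpa using hz
    have ha : p (i - 1) ∈ G.neighborFinset (p i) := by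
      have h := hadj (i - 1) (by omega)
      rw [show i - 1 + 1 = i from by omega] at h
      simpa using h.symm
    have hb : p (i + 1) ∈ G.neighborFinset (p i) := by
      simpa using hadj i h2
    have hne : p (i - 1) ≠ p (i + 1) := by
      intro h
      have := hinj (i - 1) (by omega) (i + 1) (by omega) h
      omega
    have hsub : ({p (i - 1), p (i + 1)} : Finset V) ⊆ G.neighborFinset (p i) := by
      intro z hz
      rcases Finset.mem_insert.mp hz with h | h
      · exact h ▸ ha
      · exact (Finset.mem_singleton.mp h) ▸ hb
    have hcard2 : ({p (i - 1), p (i + 1)} : Finset V).card = 2 := by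
      rw [Finset.card_insert_of_notMem (by simpa using hne), Finset.card_singleton]
    have hcard : (G.neighborFinset (p i)).card = 2 := by
      rw [G.card_neighborFinset_eq_degree]
      exact hdeg2 i h1 (by omega)
    have heq : ({p (i - 1), p (i + 1)} : Finset V) = G.neighborFinset (p i) :=
      Finset.eq_of_subset_of_card_le hsub (by omega)
    rw [← heq] at hzmem
    rcases Finset.mem_insert.mp hzmem with h | h
    · exact Or.inl h
    · exact Or.inr (Finset.mem_singleton.mp h)
  -- key step lemma
  have step : ∀ i, i < x → ∀ w, (∀ j, j ≤ i → w ≠ p j) →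
      G.dist (p i) w = G.dist (p (i + 1)) w + 1 := by
    intro i
    induction i with
    | zero =>
      intro hi w hw
      obtain ⟨z, hz, hd⟩ := firststep hconn (p 0) w (fun h => hw 0 le_rfl h.symm)
      rw [nbr0 z hz] at hd
      exact hd
    | succ i ih =>
      intro hi w hw
      obtain ⟨z, hz, hd⟩ := firststep hconn (p (i + 1)) w (fun h => hw (i + 1) le_rfl h.symm)
      rcases nbr (i + 1) (by omega) hi z hz with h | h
      · rw [h, show i + 1 - 1 = i from rfl] at hd
        have hih := ih (by omega) w (fun j hj => hw j (by omega))
        omega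
      · rw [h] at hd
        exact hd
  -- distances along the path
  have distpath : ∀ d i, i + d ≤ x → G.dist (p i) (p (i + d)) = d := by
    intro d
    induction d with
    | zero => intro i _; simp [SimpleGraph.dist_self]
    | succ d ih =>
      intro i hi
      have hw : ∀ j, j ≤ i → p (i + (d + 1)) ≠ p j := by
        intro j hj h
        have := hinj (i + (d + 1)) (by omega) j (by omega) h
        omega
      have h1 := step i (by omega) (p (i + (d + 1))) hw
      have h2 : i + (d + 1) = (i + 1) + d := by omega
      rw [h2] at h1 ⊢
      rw [ih (i + 1) (by omega)] at h1
      exact h1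
  -- the path vertex set
  set S : Finset V := (Finset.range (x + 1)).image p with hS
  have hinjOn : Set.InjOn p (Finset.range (x + 1)) := by
    intro i hi j hj h
    exact hinj i (by have := Finset.mem_range.mp hi; omega) j
      (by have := Finset.mem_range.mp hj; omega) h
  have hScard : S.card = x + 1 := by
    rw [hS, Finset.card_image_of_injOn hinjOn, Finset.card_range]
  have hxn : x + 1 ≤ n := by omega
  -- the summand function
  set f : V → ℤ := fun u => (G.dist (p (x - 1)) u : ℤ) - (G.dist (p x) u : ℤ) with hf
  have hmain : (transmission G (p (x - 1)) : ℤ) - transmission G (p x) = ∑ u : V, f u := by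
    simp only [transmission, hf]
    push_cast
    rw [Finset.sum_sub_distrib]
  rw [hmain, ← Finset.sum_add_sum_compl S f]
  -- sum over path vertices
  have hSsum : ∑ u ∈ S, f u = 1 - (x : ℤ) := by
    rw [hS, Finset.sum_image (fun i hi j hj h => hinjOn hi hj h)]
    rw [Finset.sum_range_succ]
    have hlast : f (p x) = 1 := by
      have h1 : G.dist (p (x - 1)) (p x) = 1 := by
        have := distpath 1 (x - 1) (by omega)
        rwa [show x - 1 + 1 = x from by omega] at this
      simp [hf, h1, SimpleGraph.dist_self]
    have hmid : ∀ j ∈ Finset.range x, f (p j) = -1 := by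
      intro j hj
      have hj' : j < x := Finset.mem_range.mp hj
      have h1 : G.dist (p (x - 1)) (p j) = x - 1 - j := by
        rw [SimpleGraph.dist_comm]
        have := distpath (x - 1 - j) j (by omega)
        rwa [show j + (x - 1 - j) = x - 1 from by omega] at this
      have h2 : G.dist (p x) (p j) = x - j := by
        rw [SimpleGraph.dist_comm]
        have := distpath (x - j) j (by omega)
        rwa [show j + (x - j) = x from by omega] at this
      simp only [hf, h1, h2]
      omega
    rw [Finset.sum_congr rfl hmid, hlast, Finset.sum_const, Finset.card_range]
    push_cast
    ring
  -- sum over non-path vertices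
  have hCsum : ∑ u ∈ Sᶜ, f u = (n : ℤ) - (x + 1) := by
    have heval : ∀ u ∈ Sᶜ, f u = 1 := by
      intro u hu
      have hu' : u ∉ S := Finset.mem_compl.mp hu
      have hnot : ∀ j, j ≤ x - 1 → u ≠ p j := by
        intro j hj h
        exact hu' (by
          rw [hS]
          exact Finset.mem_image.mpr ⟨j, Finset.mem_range.mpr (by omega), h.symm⟩)
      have h1 := step (x - 1) (by omega) u hnot
      rw [show x - 1 + 1 = x from by omega] at h1
      simp only [hf, h1]
      push_cast
      ring
    rw [Finset.sum_congr rfl heval, Finset.sum_const, Finset.card_compl, hScard, hn]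
    rw [nsmul_eq_mul, mul_one]
    omega
  rw [hSsum, hCsum]
  ring
end

section
/- For every a ≥ 2, in the caterpillar-like tree H²(a-1, a; a, a+1) — obtained from two vertices u and w joined by a path u v w of length 2, where u has two additional pendant paths of lengths a and a+1 attached and w has two additional pendant paths of lengths a-1 and a attached — all vertices have pairwise distinct transmissions; i.e., H²(a-1, a; a, a+1) is a transmission irregular tree of order 4a + 3. -/
/-- Arm lengths of `H²(a-1, a; a, a+1)`: arms `a` and `a+1` at `u`, arms `a-1` and `a` at `w`. -/
def armLen (a : ℕ) : Fin 4 → ℕ := ![a, a + 1, a - 1, a]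

/-- Vertex set: `Fin 3` is the central path `u v w` (as `0 1 2`), and `⟨i, j⟩` is the
`(j+1)`-st vertex on the `i`-th pendant arm. -/
abbrev HVert (a : ℕ) : Type := Fin 3 ⊕ (Σ i : Fin 4, Fin (armLen a i))

/-- Which central vertex each arm is attached to: arms 0, 1 at `u = 0`, arms 2, 3 at `w = 2`. -/
def armRoot : Fin 4 → Fin 3 := ![0, 0, 2, 2]

/-- The tree `H²(a-1, a; a, a+1)`: a central path `u v w`, pendant paths of lengths
`a` and `a+1` attached at `u`, and pendant paths of lengths `a-1` and `a` attached at `w`. -/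
def Htree (a : ℕ) : SimpleGraph (HVert a) :=
  SimpleGraph.fromRel (fun x y =>
    match x, y with
    | Sum.inl c, Sum.inl c' => ((c : ℕ) = 0 ∧ (c' : ℕ) = 1) ∨ ((c : ℕ) = 1 ∧ (c' : ℕ) = 2)
    | Sum.inl c, Sum.inr q => c = armRoot q.1 ∧ (q.2 : ℕ) = 0
    | Sum.inr q, Sum.inr q' => q.1 = q'.1 ∧ (q'.2 : ℕ) = (q.2 : ℕ) + 1
    | _, _ => False)

namespace H7
variable {a : ℕ}

def ht : HVert a → ℕ
  | .inl c => c
  | .inr ⟨i, j⟩ => (armRoot i : ℕ) + (j : ℕ) + 1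

def base : HVert a → ℕ
  | .inl c => c
  | .inr ⟨i, _⟩ => (armRoot i : ℕ)

lemma base_le_ht (x : HVert a) : base x ≤ ht x := by
  rcases x with c | ⟨i, j⟩ <;> simp [base, ht] <;> omega

lemma rootlt (i : Fin 4) : (armRoot i : ℕ) < 3 := (armRoot i).isLt

def par : HVert a → HVert a
  | .inl c => .inl ⟨(c : ℕ) - 1, by omega⟩
  | .inr ⟨i, j⟩ =>
      if h : (j : ℕ) = 0 then .inl (armRoot i)
      else .inr ⟨i, ⟨(j : ℕ) - 1, lt_of_le_of_lt (Nat.sub_le _ _) j.isLt⟩⟩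

lemma ht_par (x : HVert a) : ht (par x) = ht x - 1 := by
  rcases x with c | ⟨i, j⟩
  · simp [par, ht]
  · by_cases h : (j : ℕ) = 0 <;> simp [par, h, ht] <;> omega

lemma adj_iff {x y : HVert a} :
    (Htree a).Adj x y ↔ (0 < ht x ∧ y = par x) ∨ (0 < ht y ∧ x = par y) := by
  rw [Htree, SimpleGraph.fromRel_adj]
  rcases x with c | ⟨i, j⟩ <;> rcases y with c' | ⟨i', j'⟩
  · have := c.isLt; have := c'.isLt
    simp only [ht, par, ne_eq, Sum.inl.injEq, Fin.ext_iff, Fin.val_mk]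
    omega
  · by_cases h : (j' : ℕ) = 0 <;>
      · simp only [par, ht]
        simp [h, Fin.ext_iff]
        try omega
  · by_cases h : (j : ℕ) = 0 <;>
      · simp only [par, ht]
        simp [h, Fin.ext_iff]
        try omega
  · by_cases hii : i = i'
    · subst hii
      by_cases h : (j : ℕ) = 0 <;> by_cases h' : (j' : ℕ) = 0 <;>
        · simp only [par, ht]
          simp [h, h', Sigma.mk.inj_iff, Fin.ext_iff]
          try omega
    · have hii' : ¬ (i' = i) := fun e => hii e.symm
      by_cases h : (j : ℕ) = 0 <;> by_cases h' : (j' : ℕ) = 0 <;>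
        · simp only [par, ht]
          simp [h, h', hii, hii', Sigma.mk.inj_iff, Fin.ext_iff]
          try omega

def meet : HVert a → HVert a → ℕ
  | .inr ⟨i, j⟩, .inr ⟨i', j'⟩ =>
      if i = i' then min ((armRoot i : ℕ) + j + 1) ((armRoot i' : ℕ) + j' + 1)
      else min ((armRoot i : ℕ)) ((armRoot i' : ℕ))
  | x, y => min (base x) (base y)

def D (x y : HVert a) : ℕ := ht x + ht y - 2 * meet x y

lemma meet_le_left (x y : HVert a) : meet x y ≤ ht x := by
  rcases x with c | ⟨i, j⟩ <;> rcases y with c' | ⟨i', j'⟩ <;>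
    simp only [meet, ht, base] <;> [skip; skip; skip; split_ifs] <;> omega

lemma meet_comm (x y : HVert a) : meet x y = meet y x := by
  rcases x with c | ⟨i, j⟩ <;> rcases y with c' | ⟨i', j'⟩ <;>
    simp only [meet, ht, base, min_comm]
  by_cases hii : i = i'
  · subst hii; simp
  · rw [if_neg hii, if_neg (fun e => hii e.symm), min_comm]

lemma meet_le_right (x y : HVert a) : meet x y ≤ ht y := meet_comm x y ▸ meet_le_left y x

lemma D_comm (x y : HVert a) : D x y = D y x := by
  rw [D, D, meet_comm, Nat.add_comm]

lemma D_self (x : HVert a) : D x x = 0 := by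
  rcases x with c | ⟨i, j⟩ <;>
    simp only [D, meet, ht, base, min_self, eq_self_iff_true, if_true] <;> omega

/-- Key step bound: moving a point to its parent changes `D` by exactly one. -/
lemma D_par (x z : HVert a) (hz : 0 < ht z) :
    D x (par z) ≤ D x z + 1 ∧ D x z ≤ D x (par z) + 1 := by
  have hbx := base_le_ht x
  rcases z with c | ⟨i, j⟩
  · have hc := c.isLt
    rcases x with c' | ⟨i', j'⟩ <;>
      · simp only [D, meet, par, ht, base, Fin.val_mk] at *
        omega
  · by_cases h : (j : ℕ) = 0
    · rcases x with c' | ⟨i', j'⟩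
      · simp only [D, meet, par, ht, base] at *
        rw [dif_pos h]
        simp only [meet, base, ht]
        omega
      · simp only [par]
        rw [dif_pos h]
        by_cases hii : i' = i
        · subst hii
          simp only [D, meet, ht, base, eq_self_iff_true, if_true, min_self]
          omega
        · simp only [D, meet, ht, base, if_neg hii, min_self]
          omega
    · rcases x with c' | ⟨i', j'⟩
      · simp only [D, meet, par, ht, base] at *
        rw [dif_neg h]
        simp only [meet, base, ht, Fin.val_mk]
        omega
      · simp only [par]
        rw [dif_neg h]
        by_cases hii : i' = i
        · subst hii
          simp only [D, meet, ht, base, eq_self_iff_true, if_true, Fin.val_mk]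
          omega
        · simp only [D, meet, ht, base, if_neg hii, Fin.val_mk]
          omega

lemma D_le_walk {x y : HVert a} (w : (Htree a).Walk x y) : D x y ≤ w.length := by
  induction w with
  | nil => simp [D_self]
  | @cons p q r hpq w ih =>
    simp only [SimpleGraph.Walk.length_cons]
    rcases adj_iff.mp hpq with ⟨hp, rfl⟩ | ⟨hq, hpq'⟩
    · have h2 := (D_par r p hp).2
      rw [D_comm r p, D_comm r (par p)] at h2
      omega
    · subst hpq'
      have h1 := (D_par r q hq).1
      rw [D_comm r q, D_comm r (par q)] at h1
      omega

lemma base_lt3 (x : HVert a) : base x < 3 := by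
  rcases x with c | ⟨i, j⟩
  · exact c.isLt
  · exact (armRoot i).isLt

lemma adj_par {x : HVert a} (hx : 0 < ht x) : (Htree a).Adj x (par x) :=
  adj_iff.mpr (Or.inl ⟨hx, rfl⟩)

lemma exists_walkUp (n : ℕ) : ∀ (x : HVert a), n ≤ ht x →
    ∃ w : (Htree a).Walk x (par^[n] x), w.length = n := by
  induction n with
  | zero => exact fun x _ => ⟨SimpleGraph.Walk.nil.copy rfl (by simp), by simp⟩
  | succ n ih =>
    intro x hx
    obtain ⟨w, hw⟩ := ih (par x) (by rw [ht_par]; omega)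
    exact ⟨(SimpleGraph.Walk.cons (adj_par (by omega)) w).copy rfl
      (by rw [Function.iterate_succ_apply]), by simp [hw]⟩

lemma par_iter_center (m : ℕ) (c : Fin 3) (hm : m ≤ (c : ℕ)) :
    par^[m] (.inl c : HVert a) = .inl ⟨(c : ℕ) - m, by omega⟩ := by
  induction m with
  | zero => simp
  | succ m ih =>
    rw [Function.iterate_succ_apply', ih (by omega)]
    simp only [par, Sum.inl.injEq]
    exact Fin.ext (by simp; omega)

lemma par_iter_arm (i : Fin 4) (j : Fin (armLen a i)) (m : ℕ) (hm : m ≤ (j : ℕ)) :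
    par^[m] (.inr ⟨i, j⟩ : HVert a) =
      .inr ⟨i, ⟨(j : ℕ) - m, lt_of_le_of_lt (Nat.sub_le _ _) j.isLt⟩⟩ := by
  induction m with
  | zero => simp
  | succ m ih =>
    rw [Function.iterate_succ_apply', ih (by omega)]
    simp only [par, Fin.val_mk]
    rw [dif_neg (by omega)]
    simp only [Sum.inr.injEq, Sigma.mk.inj_iff, heq_eq_eq, true_and]
    exact Fin.ext (by simp; omega)

lemma par_iter_base (x : HVert a) (m : ℕ) (hm : m ≤ base x) :
    par^[ht x - m] x = .inl ⟨m, by have := base_lt3 x; omega⟩ := by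
  rcases x with c | ⟨i, j⟩
  · simp only [base] at hm
    rw [show ht (Sum.inl c : HVert a) = (c : ℕ) from rfl, par_iter_center ((c : ℕ) - m) c (by omega)]
    exact congrArg _ (Fin.ext (by simp; omega))
  · simp only [base] at hm
    have hht : ht (Sum.inr ⟨i, j⟩ : HVert a) - m = ((armRoot i : ℕ) - m) + ((j : ℕ) + 1) := by
      simp only [ht]; omega
    rw [hht, Function.iterate_add_apply]
    have hj1 : par^[(j : ℕ) + 1] (Sum.inr ⟨i, j⟩ : HVert a) = Sum.inl (armRoot i) := by
      rw [Function.iterate_succ_apply', par_iter_arm i j (j : ℕ) le_rfl]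
      simp only [par]
      rw [dif_pos (by simp)]
    rw [hj1, par_iter_center _ _ (by omega)]
    exact congrArg _ (Fin.ext (by simp; omega))

lemma reach (x y : HVert a) : (Htree a).Reachable x y := by
  have hx : (Htree a).Reachable x (.inl ⟨0, by omega⟩) :=
    ⟨(exists_walkUp (ht x - 0) x (by omega)).choose.copy rfl (par_iter_base x 0 (by omega))⟩
  have hy : (Htree a).Reachable y (.inl ⟨0, by omega⟩) :=
    ⟨(exists_walkUp (ht y - 0) y (by omega)).choose.copy rfl (par_iter_base y 0 (by omega))⟩
  exact hx.trans hy.symm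

lemma dist_le_center (x y : HVert a) (m : ℕ) (hmx : m ≤ base x) (hmy : m ≤ base y) :
    (Htree a).dist x y ≤ (ht x - m) + (ht y - m) := by
  obtain ⟨w1, h1⟩ := exists_walkUp (ht x - m) x (Nat.sub_le _ _)
  obtain ⟨w2, h2⟩ := exists_walkUp (ht y - m) y (Nat.sub_le _ _)
  refine le_trans (SimpleGraph.dist_le
    ((w1.copy rfl (par_iter_base x m hmx)).append
      (w2.copy rfl (par_iter_base y m hmy)).reverse)) ?_
  simp [h1, h2]

lemma dist_le_D (x y : HVert a) : (Htree a).dist x y ≤ D x y := by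
  rcases x with c | ⟨i, j⟩ <;> rcases y with c' | ⟨i', j'⟩
  · have H := dist_le_center (Sum.inl c) (Sum.inl c') (min (base (Sum.inl c : HVert a)) (base (Sum.inl c' : HVert a)))
      (min_le_left _ _) (min_le_right _ _)
    simp only [D, meet, ht, base] at H ⊢
    omega
  · have H := dist_le_center (Sum.inl c) (Sum.inr ⟨i', j'⟩)
      (min (base (Sum.inl c : HVert a)) (base (Sum.inr ⟨i', j'⟩ : HVert a)))
      (min_le_left _ _) (min_le_right _ _)
    simp only [D, meet, ht, base] at H ⊢
    omega
  · have H := dist_le_center (Sum.inr ⟨i, j⟩) (Sum.inl c')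
      (min (base (Sum.inr ⟨i, j⟩ : HVert a)) (base (Sum.inl c' : HVert a)))
      (min_le_left _ _) (min_le_right _ _)
    simp only [D, meet, ht, base] at H ⊢
    omega
  · by_cases hii : i = i'
    · subst hii
      have key : ∀ (u v : Fin (armLen a i)), (u : ℕ) ≤ (v : ℕ) →
          (Htree a).dist (Sum.inr ⟨i, u⟩ : HVert a) (Sum.inr ⟨i, v⟩) ≤ (v : ℕ) - (u : ℕ) := by
        intro u v huv
        obtain ⟨w, hw⟩ := exists_walkUp ((v : ℕ) - u) (Sum.inr ⟨i, v⟩ : HVert a)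
          (by simp only [ht]; omega)
        have he := par_iter_arm i v ((v : ℕ) - u) (Nat.sub_le _ _)
        have he2 : (⟨(v : ℕ) - ((v : ℕ) - u), lt_of_le_of_lt (Nat.sub_le _ _) v.isLt⟩ :
            Fin (armLen a i)) = u := Fin.ext (by simp; omega)
        rw [SimpleGraph.dist_comm]
        refine le_trans (SimpleGraph.dist_le (w.copy rfl (by rw [he, he2]))) (by simp [hw])
      rcases le_total (j : ℕ) (j' : ℕ) with h | h
      · have := key j j' h
        simp only [D, meet, ht, eq_self_iff_true, if_true] at *
        omega
      · have := key j' j h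
        rw [SimpleGraph.dist_comm] at this
        simp only [D, meet, ht, eq_self_iff_true, if_true] at *
        omega
    · have H := dist_le_center (Sum.inr ⟨i, j⟩) (Sum.inr ⟨i', j'⟩)
        (min (base (Sum.inr ⟨i, j⟩ : HVert a)) (base (Sum.inr ⟨i', j'⟩ : HVert a)))
        (min_le_left _ _) (min_le_right _ _)
      simp only [D, meet, ht, base, if_neg hii] at H ⊢
      omega

lemma dist_eq (x y : HVert a) : (Htree a).dist x y = D x y := by
  refine le_antisymm (dist_le_D x y) ?_
  obtain ⟨w, hw⟩ := (reach x y).exists_walk_length_eq_dist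
  exact hw ▸ D_le_walk w

open SimpleGraph Walk in
lemma htree_acyclic : (Htree a).IsAcyclic := by
  intro v c hc
  obtain ⟨u, hu, hmax⟩ := Finset.exists_max_image c.support.toFinset ht
    ⟨v, by simp [SimpleGraph.Walk.start_mem_support]⟩
  rw [List.mem_toFinset] at hu
  have hmax' : ∀ z ∈ c.support, ht z ≤ ht u := fun z hz => hmax z (List.mem_toFinset.mpr hz)
  have hsub : ∀ z, z ∈ (c.rotate u hu).support → z ∈ c.support := by
    intro z hz
    have hrot := SimpleGraph.Walk.support_rotate c u hu
    rw [SimpleGraph.Walk.support_eq_cons] at hz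
    rcases List.mem_cons.mp hz with rfl | hz'
    · exact hu
    · have := hrot.mem_iff.mp hz'
      rw [SimpleGraph.Walk.support_eq_cons c]
      exact List.mem_cons_of_mem _ this
  have hc' := hc.rotate hu
  set c' := c.rotate u hu with hcdef
  clear_value c'
  cases c' with
  | nil => exact hc'.ne_nil rfl
  | @cons _ x _ h1 p =>
    have hxu : x = par u := by
      rcases adj_iff.mp h1 with ⟨-, h⟩ | ⟨hx, h⟩
      · exact h
      · exfalso
        have hxs : x ∈ c.support := hsub x (by simp)
        have := hmax' x hxs
        have := ht_par x
        rw [← h] at this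
        omega
    have hlen : 2 ≤ p.length := by
      have := hc'.three_le_length
      simp only [SimpleGraph.Walk.length_cons] at this
      omega
    cases hrev : p.reverse with
    | nil =>
      have hplen : p.length = 0 := by simpa using congrArg SimpleGraph.Walk.length hrev
      omega
    | @cons _ y _ h2 q =>
      have hyu : y = par u := by
        rcases adj_iff.mp h2 with ⟨-, h⟩ | ⟨hy, h⟩
        · exact h
        · exfalso
          have hys : y ∈ c.support := by
            apply hsub
            have : y ∈ p.support := by
              have : y ∈ p.reverse.support := by
                rw [hrev]
                simp [SimpleGraph.Walk.support_cons]
              rwa [SimpleGraph.Walk.support_reverse, List.mem_reverse] at this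
            simp [SimpleGraph.Walk.support_cons, this]
          have := hmax' y hys
          have := ht_par y
          rw [← h] at this
          omega
      have hedge_mem : s(u, y) ∈ p.edges := by
        have : s(u, y) ∈ p.reverse.edges := by rw [hrev]; simp
        rwa [SimpleGraph.Walk.edges_reverse, List.mem_reverse] at this
      have hnodup := hc'.edges_nodup
      simp only [SimpleGraph.Walk.edges_cons, List.nodup_cons] at hnodup
      exact hnodup.1 (by rwa [hyu, ← hxu] at hedge_mem)

lemma htree_connected : (Htree a).Connected :=
  ⟨fun x y => reach x y⟩

lemma htree_isTree : (Htree a).IsTree := ⟨htree_connected, htree_acyclic⟩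

lemma card_hvert (ha : 1 ≤ a) : Fintype.card (HVert a) = 4 * a + 3 := by
  rw [Fintype.card_sum, Fintype.card_sigma]
  simp only [Fintype.card_fin, Fin.sum_univ_four]
  simp [Fintype.card_sum, Fintype.card_sigma, Fin.sum_univ_four, armLen]
  omega

/-! ### Sum helpers -/

def Gs (n : ℕ) : ℕ := ∑ j ∈ Finset.range n, j

lemma gauss (n : ℕ) : 2 * Gs n = n * (n - 1) := by
  rw [Gs, mul_comm]; exact Finset.sum_range_id_mul_two n

lemma sum_fin_shift (n K : ℕ) : ∑ j : Fin n, (K + (j : ℕ)) = n * K + Gs n := by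
  rw [Fin.sum_univ_eq_sum_range (fun j => K + j) n, Finset.sum_add_distrib,
    Finset.sum_const, Finset.card_range, smul_eq_mul, Gs]

lemma sum_abs_range (t k : ℕ) :
    ∑ j ∈ Finset.range (t + k), (t + j - 2 * min t j) = (Gs t + t) + Gs k := by
  induction k with
  | zero =>
    rw [Nat.add_zero]
    have h1 : ∀ j ∈ Finset.range t, t + j - 2 * min t j = (t - 1 - j) + 1 := by
      intro j hj
      rw [Finset.mem_range] at hj
      omega
    rw [Finset.sum_congr rfl h1, Finset.sum_add_distrib, Finset.sum_const,
      Finset.card_range, smul_eq_mul, mul_one,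
      Finset.sum_range_reflect (fun i => i) t]
    simp [Gs]
  | succ k ih =>
    have h1 : t + (k + 1) = (t + k) + 1 := by omega
    rw [h1, Finset.sum_range_succ, ih]
    have h2 : Gs (k + 1) = Gs k + k := Finset.sum_range_succ _ _
    have h3 : min t (t + k) = t := by omega
    omega

lemma sum_fin_abs (n t : ℕ) (h : t < n) :
    ∑ j : Fin n, (t + (j : ℕ) - 2 * min t (j : ℕ)) = (Gs t + t) + Gs (n - t) := by
  rw [Fin.sum_univ_eq_sum_range (fun j => t + j - 2 * min t j) n]
  obtain ⟨k, rfl⟩ : ∃ k, n = t + k := ⟨n - t, by omega⟩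
  rw [sum_abs_range]
  congr 2
  omega

/-! ### Decomposing the sum of distances -/

lemma sum_D (x : HVert a) : ∑ y : HVert a, D x y =
    (D x (.inl 0) + D x (.inl 1) + D x (.inl 2)) +
    ((∑ j : Fin (armLen a 0), D x (.inr ⟨0, j⟩)) +
     (∑ j : Fin (armLen a 1), D x (.inr ⟨1, j⟩)) +
     (∑ j : Fin (armLen a 2), D x (.inr ⟨2, j⟩)) +
     (∑ j : Fin (armLen a 3), D x (.inr ⟨3, j⟩))) := by
  rw [Fintype.sum_sum_type]
  congr 1
  · exact Fin.sum_univ_three _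
  · rw [← Finset.univ_sigma_univ, Finset.sum_sigma, Fin.sum_univ_four]

lemma transmission_D (x : HVert a) : transmission (Htree a) x = ∑ y : HVert a, D x y := by
  rw [transmission]
  exact Finset.sum_congr rfl fun y _ => dist_eq x y

lemma sum_arm_other (x : HVert a) (i : Fin 4) (K : ℕ)
    (hK : ∀ j : Fin (armLen a i), D x (.inr ⟨i, j⟩) = K + (j : ℕ)) :
    ∑ j : Fin (armLen a i), D x (.inr ⟨i, j⟩) = armLen a i * K + Gs (armLen a i) := by
  rw [Finset.sum_congr rfl (fun j _ => hK j), sum_fin_shift]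

lemma sum_arm_self (i : Fin 4) (t : Fin (armLen a i)) :
    ∑ j : Fin (armLen a i), D (.inr ⟨i, t⟩) (.inr ⟨i, j⟩) =
      (Gs (t : ℕ) + (t : ℕ)) + Gs (armLen a i - (t : ℕ)) := by
  have h : ∀ j : Fin (armLen a i), D (.inr ⟨i, t⟩ : HVert a) (.inr ⟨i, j⟩) =
      (t : ℕ) + (j : ℕ) - 2 * min (t : ℕ) (j : ℕ) := by
    intro j
    simp only [D, meet, ht, eq_self_iff_true, if_true]
    omega
  rw [Finset.sum_congr rfl (fun j _ => h j), sum_fin_abs _ _ t.isLt]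

lemma gauss' (n : ℕ) : 2 * Gs n + n = n * n := by
  cases n with
  | zero => simp [Gs]
  | succ m =>
    have h : 2 * Gs (m + 1) = (m + 1) * m := by
      have := gauss (m + 1)
      simpa using this
    rw [h]
    ring

lemma armK (x : HVert a) (i : Fin 4) (K : ℕ)
    (hK : ∀ j : Fin (armLen a i), D x (.inr ⟨i, j⟩) = K + (j : ℕ)) :
    ∑ j : Fin (armLen a i), D x (.inr ⟨i, j⟩) = armLen a i * K + Gs (armLen a i) :=
  sum_arm_other x i K hK

lemma T_c0 (ha : 2 ≤ a) :
    2 * transmission (Htree a) (.inl 0) = 2 * (0 * 0 + 2*a*0 + 2*(a*a) + (6*a+2)) := by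
  rw [transmission_D, sum_D,
    armK _ 0 1 (fun j => by simp [D, meet, ht, base, armRoot]; omega),
    armK _ 1 1 (fun j => by simp [D, meet, ht, base, armRoot]; omega),
    armK _ 2 3 (fun j => by simp [D, meet, ht, base, armRoot]; omega),
    armK _ 3 3 (fun j => by simp [D, meet, ht, base, armRoot]; omega),
    show D (.inl 0 : HVert a) (.inl 0) + D (.inl 0) (.inl 1) + D (.inl 0) (.inl 2) = 3 by
      simp [D, meet, ht, base]]
  simp only [armLen, Matrix.cons_val_zero, Matrix.cons_val_one, Matrix.head_cons,
    Matrix.cons_val_two, Matrix.tail_cons, Matrix.cons_val_three]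
  have g1 := gauss' a; have g2 := gauss' (a+1); have g3 := gauss' (a-1)
  zify [show 1 ≤ a by omega] at g1 g2 g3 ⊢
  linear_combination 2*g1 + g2 + g3

lemma T_c1 (ha : 2 ≤ a) :
    2 * transmission (Htree a) (.inl 1) = 2 * (0 * 0 + 2*a*0 + 2*(a*a) + (6*a+3)) := by
  rw [transmission_D, sum_D,
    armK _ 0 2 (fun j => by simp [D, meet, ht, base, armRoot]; omega),
    armK _ 1 2 (fun j => by simp [D, meet, ht, base, armRoot]; omega),
    armK _ 2 2 (fun j => by simp [D, meet, ht, base, armRoot]; omega),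
    armK _ 3 2 (fun j => by simp [D, meet, ht, base, armRoot]; omega),
    show D (.inl 1 : HVert a) (.inl 0) + D (.inl 1) (.inl 1) + D (.inl 1) (.inl 2) = 2 by
      simp [D, meet, ht, base]]
  simp only [armLen, Matrix.cons_val_zero, Matrix.cons_val_one, Matrix.head_cons,
    Matrix.cons_val_two, Matrix.tail_cons, Matrix.cons_val_three]
  have g1 := gauss' a; have g2 := gauss' (a+1); have g3 := gauss' (a-1)
  zify [show 1 ≤ a by omega] at g1 g2 g3 ⊢
  linear_combination 2*g1 + g2 + g3

lemma T_c2 (ha : 2 ≤ a) :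
    2 * transmission (Htree a) (.inl 2) = 2 * (1 * 1 + 2*a*1 + 2*(a*a) + (4*a+5)) := by
  rw [transmission_D, sum_D,
    armK _ 0 3 (fun j => by simp [D, meet, ht, base, armRoot]; omega),
    armK _ 1 3 (fun j => by simp [D, meet, ht, base, armRoot]; omega),
    armK _ 2 1 (fun j => by simp [D, meet, ht, base, armRoot]; omega),
    armK _ 3 1 (fun j => by simp [D, meet, ht, base, armRoot]; omega),
    show D (.inl 2 : HVert a) (.inl 0) + D (.inl 2) (.inl 1) + D (.inl 2) (.inl 2) = 3 by
      simp [D, meet, ht, base]]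
  simp only [armLen, Matrix.cons_val_zero, Matrix.cons_val_one, Matrix.head_cons,
    Matrix.cons_val_two, Matrix.tail_cons, Matrix.cons_val_three]
  have g1 := gauss' a; have g2 := gauss' (a+1); have g3 := gauss' (a-1)
  zify [show 1 ≤ a by omega] at g1 g2 g3 ⊢
  linear_combination 2*g1 + g2 + g3

lemma T_arm0 (ha : 2 ≤ a) (t : Fin (armLen a 0)) :
    2 * transmission (Htree a) (.inr ⟨0, t⟩) =
      2 * (((t:ℕ)+2) * ((t:ℕ)+2) + 2*a*((t:ℕ)+2) + 2*(a*a) + (4*a+1)) := by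
  have ht0 : (t : ℕ) < a := by have := t.isLt; simpa [armLen] using this
  rw [transmission_D, sum_D, sum_arm_self 0 t,
    armK _ 1 ((t:ℕ)+2) (fun j => by simp [D, meet, ht, base, armRoot]; omega),
    armK _ 2 ((t:ℕ)+4) (fun j => by simp [D, meet, ht, base, armRoot]; omega),
    armK _ 3 ((t:ℕ)+4) (fun j => by simp [D, meet, ht, base, armRoot]; omega),
    show D (.inr ⟨0, t⟩ : HVert a) (.inl 0) + D (.inr ⟨0, t⟩) (.inl 1) +
        D (.inr ⟨0, t⟩) (.inl 2) = 3*(t:ℕ)+6 by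
      simp [D, meet, ht, base, armRoot]; omega]
  simp only [armLen, Matrix.cons_val_zero, Matrix.cons_val_one, Matrix.head_cons,
    Matrix.cons_val_two, Matrix.tail_cons, Matrix.cons_val_three]
  have g1 := gauss' a; have g2 := gauss' (a+1); have g3 := gauss' (a-1)
  have g4 := gauss' (t:ℕ); have g5 := gauss' (a - (t:ℕ))
  zify [show 1 ≤ a by omega, show (t:ℕ) ≤ a by omega] at g1 g2 g3 g4 g5 ⊢
  linear_combination g1 + g2 + g3 + g4 + g5

lemma T_arm1 (ha : 2 ≤ a) (t : Fin (armLen a 1)) :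
    2 * transmission (Htree a) (.inr ⟨1, t⟩) =
      2 * (((t:ℕ)+1) * ((t:ℕ)+1) + 2*a*((t:ℕ)+1) + 2*(a*a) + (6*a+2)) := by
  have ht0 : (t : ℕ) < a + 1 := by have := t.isLt; simpa [armLen] using this
  rw [transmission_D, sum_D, sum_arm_self 1 t,
    armK _ 0 ((t:ℕ)+2) (fun j => by simp [D, meet, ht, base, armRoot]; omega),
    armK _ 2 ((t:ℕ)+4) (fun j => by simp [D, meet, ht, base, armRoot]; omega),
    armK _ 3 ((t:ℕ)+4) (fun j => by simp [D, meet, ht, base, armRoot]; omega),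
    show D (.inr ⟨1, t⟩ : HVert a) (.inl 0) + D (.inr ⟨1, t⟩) (.inl 1) +
        D (.inr ⟨1, t⟩) (.inl 2) = 3*(t:ℕ)+6 by
      simp [D, meet, ht, base, armRoot]; omega]
  simp only [armLen, Matrix.cons_val_zero, Matrix.cons_val_one, Matrix.head_cons,
    Matrix.cons_val_two, Matrix.tail_cons, Matrix.cons_val_three]
  have g1 := gauss' a; have g2 := gauss' (a+1); have g3 := gauss' (a-1)
  have g4 := gauss' (t:ℕ); have g5 := gauss' (a + 1 - (t:ℕ))
  zify [show 1 ≤ a by omega, show (t:ℕ) ≤ a + 1 by omega] at g1 g2 g3 g4 g5 ⊢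
  linear_combination 2*g1 + g3 + g4 + g5

lemma T_arm2 (ha : 2 ≤ a) (t : Fin (armLen a 2)) :
    2 * transmission (Htree a) (.inr ⟨2, t⟩) =
      2 * (((t:ℕ)+3) * ((t:ℕ)+3) + 2*a*((t:ℕ)+3) + 2*(a*a) + (2*a+2)) := by
  have ht0 : (t : ℕ) < a - 1 := by have := t.isLt; simpa [armLen] using this
  rw [transmission_D, sum_D, sum_arm_self 2 t,
    armK _ 0 ((t:ℕ)+4) (fun j => by simp [D, meet, ht, base, armRoot]; omega),
    armK _ 1 ((t:ℕ)+4) (fun j => by simp [D, meet, ht, base, armRoot]; omega),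
    armK _ 3 ((t:ℕ)+2) (fun j => by simp [D, meet, ht, base, armRoot]; omega),
    show D (.inr ⟨2, t⟩ : HVert a) (.inl 0) + D (.inr ⟨2, t⟩) (.inl 1) +
        D (.inr ⟨2, t⟩) (.inl 2) = 3*(t:ℕ)+6 by
      simp [D, meet, ht, base, armRoot]; omega]
  simp only [armLen, Matrix.cons_val_zero, Matrix.cons_val_one, Matrix.head_cons,
    Matrix.cons_val_two, Matrix.tail_cons, Matrix.cons_val_three]
  have g1 := gauss' a; have g2 := gauss' (a+1); have g3 := gauss' (a-1)
  have g4 := gauss' (t:ℕ); have g5 := gauss' (a - 1 - (t:ℕ))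
  zify [show 1 ≤ a by omega, show (t:ℕ) ≤ a - 1 by omega, show (t:ℕ) + 1 ≤ a by omega] at g1 g2 g3 g4 g5 ⊢
  linear_combination 2*g1 + g2 + g4 + g5

lemma T_arm3 (ha : 2 ≤ a) (t : Fin (armLen a 3)) :
    2 * transmission (Htree a) (.inr ⟨3, t⟩) =
      2 * (((t:ℕ)+2) * ((t:ℕ)+2) + 2*a*((t:ℕ)+2) + 2*(a*a) + (4*a+5)) := by
  have ht0 : (t : ℕ) < a := by have := t.isLt; simpa [armLen] using this
  rw [transmission_D, sum_D, sum_arm_self 3 t,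
    armK _ 0 ((t:ℕ)+4) (fun j => by simp [D, meet, ht, base, armRoot]; omega),
    armK _ 1 ((t:ℕ)+4) (fun j => by simp [D, meet, ht, base, armRoot]; omega),
    armK _ 2 ((t:ℕ)+2) (fun j => by simp [D, meet, ht, base, armRoot]; omega),
    show D (.inr ⟨3, t⟩ : HVert a) (.inl 0) + D (.inr ⟨3, t⟩) (.inl 1) +
        D (.inr ⟨3, t⟩) (.inl 2) = 3*(t:ℕ)+6 by
      simp [D, meet, ht, base, armRoot]; omega]
  simp only [armLen, Matrix.cons_val_zero, Matrix.cons_val_one, Matrix.head_cons,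
    Matrix.cons_val_two, Matrix.tail_cons, Matrix.cons_val_three]
  have g1 := gauss' a; have g2 := gauss' (a+1); have g3 := gauss' (a-1)
  have g4 := gauss' (t:ℕ); have g5 := gauss' (a - (t:ℕ))
  zify [show 1 ≤ a by omega, show (t:ℕ) ≤ a by omega] at g1 g2 g3 g4 g5 ⊢
  linear_combination g1 + g2 + g3 + g4 + g5

lemma collide_aux (a S S' C C' : ℕ) (hlt : S < S')
    (h : S * S + 2*a*S + C = S' * S' + 2*a*S' + C') :
    (S' = S + 1 ∧ C = C' + S + S' + 2*a) ∨ C' + 2*(S + S' + 2*a) ≤ C := by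
  obtain ⟨d, rfl⟩ : ∃ d, S' = S + (d + 1) := ⟨S' - S - 1, by omega⟩
  have hd : C = C' + (d+1)*(2*S + (d+1) + 2*a) := by
    zify at h ⊢
    linear_combination h
  rcases Nat.eq_zero_or_pos d with rfl | hdpos
  · left
    refine ⟨rfl, ?_⟩
    omega
  · right
    obtain ⟨P, hPeq⟩ : ∃ P, (d+1)*(2*S + (d+1) + 2*a) = P := ⟨_, rfl⟩
    rw [hPeq] at hd
    have hm : 2*(2*S + (d+1) + 2*a) ≤ P :=
      hPeq ▸ Nat.mul_le_mul_right _ (by omega)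
    omega

lemma collide (a S S' C C' : ℕ)
    (h : S * S + 2*a*S + C = S' * S' + 2*a*S' + C') :
    (S = S' ∧ C = C') ∨
    (S < S' ∧ ((S' = S + 1 ∧ C = C' + S + S' + 2*a) ∨ C' + 2*(S + S' + 2*a) ≤ C)) ∨
    (S' < S ∧ ((S = S' + 1 ∧ C' = C + S + S' + 2*a) ∨ C + 2*(S + S' + 2*a) ≤ C')) := by
  rcases lt_trichotomy S S' with hlt | rfl | hlt
  · exact Or.inr (Or.inl ⟨hlt, collide_aux a S S' C C' hlt h⟩)
  · left
    refine ⟨rfl, ?_⟩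
    have : C = C' := by linarith
    exact this
  · have := collide_aux a S' S C' C hlt h.symm
    right; right
    refine ⟨hlt, ?_⟩
    rcases this with ⟨h1, h2⟩ | h1
    · exact Or.inl ⟨h1, by omega⟩
    · exact Or.inr (by omega)

def sv : HVert a → ℕ
  | .inl c => if (c : ℕ) = 2 then 1 else 0
  | .inr ⟨i, j⟩ => (j : ℕ) + (![2, 1, 3, 2] : Fin 4 → ℕ) i

def cv (a : ℕ) : HVert a → ℕ
  | .inl c => (![6*a+2, 6*a+3, 4*a+5] : Fin 3 → ℕ) c
  | .inr ⟨i, _⟩ => (![4*a+1, 6*a+2, 2*a+2, 4*a+5] : Fin 4 → ℕ) i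

lemma T_closed (ha : 2 ≤ a) (x : HVert a) :
    2 * transmission (Htree a) x =
      2 * (sv x * sv x + 2*a*(sv x) + 2*(a*a) + cv a x) := by
  rcases x with c | ⟨i, j⟩
  · fin_cases c
    · simpa [sv, cv] using T_c0 ha
    · simpa [sv, cv] using T_c1 ha
    · simpa [sv, cv] using T_c2 ha
  · fin_cases i
    · simpa [sv, cv] using T_arm0 ha j
    · simpa [sv, cv] using T_arm1 ha j
    · simpa [sv, cv] using T_arm2 ha j
    · simpa [sv, cv] using T_arm3 ha j

lemma T_inj (ha : 2 ≤ a) : Function.Injective (transmission (Htree a)) := by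
  intro x y hxy
  have hE : sv x * sv x + 2*a*(sv x) + cv a x = sv y * sv y + 2*a*(sv y) + cv a y := by
    have h1 := T_closed ha x
    have h2 := T_closed ha y
    rw [hxy, h2] at h1
    linarith
  have hcol := collide a (sv x) (sv y) (cv a x) (cv a y) hE
  clear hE hxy
  rcases x with c | ⟨i, j⟩ <;> rcases y with c' | ⟨i', j'⟩
  · fin_cases c <;> fin_cases c' <;>
      first
      | rfl
      | (exfalso; simp only [sv, cv] at hcol; simp at hcol; all_goals omega)
  · have hj' := j'.isLt
    fin_cases c <;> fin_cases i' <;>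
      (exfalso; simp [sv, cv, armLen] at hcol hj'; all_goals omega)
  · have hj := j.isLt
    fin_cases c' <;> fin_cases i <;>
      (exfalso; simp [sv, cv, armLen] at hcol hj; all_goals omega)
  · have hj := j.isLt; have hj' := j'.isLt
    fin_cases i <;> fin_cases i' <;>
      first
      | (exfalso; simp [sv, cv, armLen] at hcol hj hj'; all_goals omega)
      | (simp [sv, cv, armLen] at hcol hj hj'
         have : j = j' := Fin.ext (by omega)
         rw [this])

end H7

/-- For every `a ≥ 2`, the tree `H²(a-1, a; a, a+1)` is a transmission irregular
tree of order `4a + 3`. -/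
theorem stmt_7 (a : ℕ) (ha : 2 ≤ a) :
    Fintype.card (HVert a) = 4 * a + 3 ∧ (Htree a).IsTree ∧
      Function.Injective (transmission (Htree a)) :=
  ⟨H7.card_hvert (by omega), H7.htree_isTree, H7.T_inj ha⟩
end

section
/- Fix an integer b ≥ 3. Define B_1 = {2kb + k² - 2k : k ∈ [b+1]}, B_2 = {2kb + k² : k ∈ [b]}, B_3 = {2kb + (k+1)² + 7 : k ∈ [b-1]}, and B_4 = {2kb + (k+2)² + 4 : k ∈ [b-2]}. Then B_1, B_2, B_3, B_4 are pairwise disjoint. -/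
/-- For `b ≥ 3`, the four sets `B₁ = {2kb + k² - 2k : k ∈ [b+1]}`,
`B₂ = {2kb + k² : k ∈ [b]}`, `B₃ = {2kb + (k+1)² + 7 : k ∈ [b-1]}`,
`B₄ = {2kb + (k+2)² + 4 : k ∈ [b-2]}` are pairwise disjoint. -/
theorem stmt_10 (b : ℕ) (hb : 3 ≤ b)
    (B1 B2 B3 B4 : Set ℤ)
    (hB1 : B1 = {x | ∃ k : ℤ, 1 ≤ k ∧ k ≤ (b : ℤ) + 1 ∧ x = 2 * k * b + k ^ 2 - 2 * k})
    (hB2 : B2 = {x | ∃ k : ℤ, 1 ≤ k ∧ k ≤ (b : ℤ) ∧ x = 2 * k * b + k ^ 2})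
    (hB3 : B3 = {x | ∃ k : ℤ, 1 ≤ k ∧ k ≤ (b : ℤ) - 1 ∧ x = 2 * k * b + (k + 1) ^ 2 + 7})
    (hB4 : B4 = {x | ∃ k : ℤ, 1 ≤ k ∧ k ≤ (b : ℤ) - 2 ∧ x = 2 * k * b + (k + 2) ^ 2 + 4}) :
    Disjoint B1 B2 ∧ Disjoint B1 B3 ∧ Disjoint B1 B4 ∧
      Disjoint B2 B3 ∧ Disjoint B2 B4 ∧ Disjoint B3 B4 := by
  have hb' : (3 : ℤ) ≤ (b : ℤ) := by exact_mod_cast hb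
  subst hB1 hB2 hB3 hB4
  refine ⟨?_, ?_, ?_, ?_, ?_, ?_⟩ <;> rw [Set.disjoint_left]
  · -- B1 vs B2
    rintro x ⟨k, hk1, hk2, rfl⟩ ⟨j, hj1, hj2, hj⟩
    rcases le_or_gt k j with h | h
    · nlinarith [mul_nonneg (by linarith : (0:ℤ) ≤ j - k)
        (by linarith : (0:ℤ) ≤ 2 * b + k + j)]
    · nlinarith [mul_nonneg (by linarith : (0:ℤ) ≤ k - j - 1)
        (by linarith : (0:ℤ) ≤ 2 * b + k + j)]
  · -- B1 vs B3
    rintro x ⟨k, hk1, hk2, rfl⟩ ⟨j, hj1, hj2, hj⟩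
    rcases (show k ≤ j ∨ k = j + 1 ∨ j + 2 ≤ k by omega) with h | h | h
    · nlinarith [mul_nonneg (by linarith : (0:ℤ) ≤ j - k)
        (by linarith : (0:ℤ) ≤ 2 * b + k + j)]
    · subst h
      have h9 : (2:ℤ) * b = 2 * j + 9 := by linear_combination hj
      omega
    · nlinarith [mul_nonneg (by linarith : (0:ℤ) ≤ k - j - 2)
        (by linarith : (0:ℤ) ≤ 2 * b + k + j)]
  · -- B1 vs B4
    rintro x ⟨k, hk1, hk2, rfl⟩ ⟨j, hj1, hj2, hj⟩
    rcases (show k ≤ j ∨ k = j + 1 ∨ j + 2 ≤ k by omega) with h | h | h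
    · nlinarith [mul_nonneg (by linarith : (0:ℤ) ≤ j - k)
        (by linarith : (0:ℤ) ≤ 2 * b + k + j)]
    · subst h
      have h9 : (2:ℤ) * b = 4 * j + 9 := by linear_combination hj
      omega
    · nlinarith [mul_nonneg (by linarith : (0:ℤ) ≤ k - j - 2)
        (by linarith : (0:ℤ) ≤ 2 * b + k + j)]
  · -- B2 vs B3
    rintro x ⟨k, hk1, hk2, rfl⟩ ⟨j, hj1, hj2, hj⟩
    rcases (show k ≤ j ∨ k = j + 1 ∨ j + 2 ≤ k by omega) with h | h | h
    · nlinarith [mul_nonneg (by linarith : (0:ℤ) ≤ j - k)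
        (by linarith : (0:ℤ) ≤ 2 * b + k + j)]
    · subst h
      have h9 : (2:ℤ) * b = 7 := by linear_combination hj
      omega
    · nlinarith [mul_nonneg (by linarith : (0:ℤ) ≤ k - j - 2)
        (by linarith : (0:ℤ) ≤ 2 * b + k + j)]
  · -- B2 vs B4
    rintro x ⟨k, hk1, hk2, rfl⟩ ⟨j, hj1, hj2, hj⟩
    rcases (show k ≤ j ∨ k = j + 1 ∨ j + 2 ≤ k by omega) with h | h | h
    · nlinarith [mul_nonneg (by linarith : (0:ℤ) ≤ j - k)
        (by linarith : (0:ℤ) ≤ 2 * b + k + j)]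
    · subst h
      have h9 : (2:ℤ) * b = 2 * j + 7 := by linear_combination hj
      omega
    · nlinarith [mul_nonneg (by linarith : (0:ℤ) ≤ k - j - 2)
        (by linarith : (0:ℤ) ≤ 2 * b + k + j)]
  · -- B3 vs B4
    rintro x ⟨k, hk1, hk2, rfl⟩ ⟨j, hj1, hj2, hj⟩
    rcases (show k ≤ j - 1 ∨ k = j ∨ j + 1 ≤ k by omega) with h | h | h
    · nlinarith [mul_nonneg (by linarith : (0:ℤ) ≤ j - k - 1)
        (by linarith : (0:ℤ) ≤ 2 * b + k + j)]
    · subst h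
      have h0 : (2:ℤ) * k = 0 := by linear_combination -hj
      omega
    · nlinarith [mul_nonneg (by linarith : (0:ℤ) ≤ k - j - 1)
        (by linarith : (0:ℤ) ≤ 2 * b + k + j)]
end

section
/- Fix an integer a ≥ 3 odd. Define A_1 = {(2j+1)a + (j-2)(j+1) : j ∈ [a+2]_0}, A_2 = {(2j+1)a + (j+6)(j+1) : j ∈ [a-2]_0}, B_1 = {2ja + j(j+1) : j ∈ [a+1]_0}, B_2 = {2ja + j(j+5) + 2 : j ∈ [a-1]_0}. Then: (1) every element of A_1 ∪ A_2 is odd and every element of B_1 ∪ B_2 is even; (2) B_1 ∩ B_2 = ∅; (3) A_1 ∩ A_2 = ∅ if and only if a ≢ 1 (mod 3). -/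
/-- For odd `a ≥ 3`, with `A₁ = {(2j+1)a + (j-2)(j+1) : j ∈ [a+2]₀}`,
`A₂ = {(2j+1)a + (j+6)(j+1) : j ∈ [a-2]₀}`, `B₁ = {2ja + j(j+1) : j ∈ [a+1]₀}`,
`B₂ = {2ja + j(j+5) + 2 : j ∈ [a-1]₀}`:
(1) all elements of `A₁ ∪ A₂` are odd and all elements of `B₁ ∪ B₂` are even;
(2) `B₁ ∩ B₂ = ∅`; (3) `A₁ ∩ A₂ = ∅` iff `a ≢ 1 (mod 3)`. -/
theorem stmt_13 (a : ℕ) (ha : 3 ≤ a) (haodd : Odd a)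
    (A1 A2 B1 B2 : Set ℤ)
    (hA1 : A1 = {x | ∃ j : ℤ, 0 ≤ j ∧ j ≤ (a : ℤ) + 2 ∧
      x = (2 * j + 1) * a + (j - 2) * (j + 1)})
    (hA2 : A2 = {x | ∃ j : ℤ, 0 ≤ j ∧ j ≤ (a : ℤ) - 2 ∧
      x = (2 * j + 1) * a + (j + 6) * (j + 1)})
    (hB1 : B1 = {x | ∃ j : ℤ, 0 ≤ j ∧ j ≤ (a : ℤ) + 1 ∧ x = 2 * j * a + j * (j + 1)})
    (hB2 : B2 = {x | ∃ j : ℤ, 0 ≤ j ∧ j ≤ (a : ℤ) - 1 ∧ x = 2 * j * a + j * (j + 5) + 2}) :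
    (∀ x ∈ A1 ∪ A2, Odd x) ∧ (∀ x ∈ B1 ∪ B2, Even x) ∧
      Disjoint B1 B2 ∧ (Disjoint A1 A2 ↔ a % 3 ≠ 1) := by
  have haZ : Odd (a : ℤ) := (Int.odd_coe_nat a).mpr haodd
  obtain ⟨m, hm⟩ := haZ
  have haZ3 : (3 : ℤ) ≤ (a : ℤ) := by exact_mod_cast ha
  refine ⟨?_, ?_, ?_, ?_⟩
  · rintro x (hx | hx)
    · rw [hA1] at hx
      obtain ⟨j, hj0, hj1, rfl⟩ := hx
      obtain ⟨t, ht⟩ := Int.even_mul_succ_self j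
      exact ⟨2 * j * m + m + t - 1, by linear_combination (2 * j + 1) * hm + ht⟩
    · rw [hA2] at hx
      obtain ⟨j, hj0, hj1, rfl⟩ := hx
      obtain ⟨t, ht⟩ := Int.even_mul_succ_self j
      exact ⟨2 * j * m + m + t + 4 * j + 3, by linear_combination (2 * j + 1) * hm + ht⟩
  · rintro x (hx | hx)
    · rw [hB1] at hx
      obtain ⟨j, hj0, hj1, rfl⟩ := hx
      obtain ⟨t, ht⟩ := Int.even_mul_succ_self j
      exact ⟨j * a + t, by linear_combination ht⟩
    · rw [hB2] at hx
      obtain ⟨j, hj0, hj1, rfl⟩ := hx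
      obtain ⟨t, ht⟩ := Int.even_mul_succ_self j
      exact ⟨j * a + t + 2 * j + 1, by linear_combination ht⟩
  · rw [Set.disjoint_left]
    rintro x hx hx'
    rw [hB1] at hx
    rw [hB2] at hx'
    obtain ⟨j, hj0, hj1, rfl⟩ := hx
    obtain ⟨k, hk0, hk1, heq⟩ := hx'
    have h : (j - k) * (j + k + 2 * (a : ℤ) + 1) = 4 * k + 2 := by linear_combination heq
    have hpos : (0 : ℤ) < j + k + 2 * a + 1 := by linarith
    have hd1 : 1 ≤ j - k := by
      by_contra hc
      push_neg at hc
      nlinarith [mul_nonneg (show (0:ℤ) ≤ k - j by linarith) (le_of_lt hpos)]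
    have hd2 : j - k ≤ 1 := by
      by_contra hc
      push_neg at hc
      nlinarith [mul_nonneg (show (0:ℤ) ≤ j - k - 2 by linarith) (le_of_lt hpos)]
    have hjk : j = k + 1 := by omega
    subst hjk
    nlinarith [h]
  · constructor
    · intro hdis
      by_contra h1
      obtain ⟨t, htt⟩ : ∃ t : ℕ, a = 3 * t + 4 := ⟨(a - 4) / 3, by omega⟩
      have ht : (a : ℤ) = 3 * (t : ℤ) + 4 := by exact_mod_cast htt
      have ht0 : (0 : ℤ) ≤ (t : ℤ) := Int.natCast_nonneg t
      refine Set.disjoint_left.mp hdis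
        (show ((2 * ((t:ℤ)+1) + 1) * a + (((t:ℤ)+1) - 2) * (((t:ℤ)+1) + 1)) ∈ A1 from ?_) ?_
      · rw [hA1]
        exact ⟨(t:ℤ) + 1, by linarith, by linarith, rfl⟩
      · rw [hA2]
        exact ⟨(t:ℤ), ht0, by linarith, by linear_combination 2 * ht⟩
    · intro h3
      rw [Set.disjoint_left]
      rintro x hx hx'
      rw [hA1] at hx
      rw [hA2] at hx'
      obtain ⟨j, hj0, hj1, rfl⟩ := hx
      obtain ⟨k, hk0, hk1, heq⟩ := hx'
      have h : (j - k) * (j + k + 2 * (a : ℤ) - 1) = 8 * (k + 1) := by linear_combination heq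
      have hpos : (0 : ℤ) < j + k + 2 * a - 1 := by linarith
      have hd1 : 1 ≤ j - k := by
        by_contra hc
        push_neg at hc
        nlinarith [mul_nonneg (show (0:ℤ) ≤ k - j by linarith) (le_of_lt hpos)]
      have hd2 : j - k ≤ 3 := by
        by_contra hc
        push_neg at hc
        nlinarith [mul_nonneg (show (0:ℤ) ≤ j - k - 4 by linarith) (le_of_lt hpos)]
      have : j - k = 1 ∨ j - k = 2 ∨ j - k = 3 := by omega
      rcases this with hjk | hjk | hjk
      · have hjk' : j = k + 1 := by omega
        subst hjk'
        have : (a : ℤ) = 3 * k + 4 := by nlinarith [h]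
        omega
      · have hjk' : j = k + 2 := by omega
        subst hjk'
        have : 2 * (a : ℤ) = 2 * k + 3 := by nlinarith [h]
        omega
      · have hjk' : j = k + 3 := by omega
        subst hjk'
        have : 3 * (a : ℤ) = k + 1 := by nlinarith [h]
        omega
end

section
/- Fix an integer a ≥ 3. Define A_1 = {2ja + j(j-1) : j ∈ [a+2]_0}, A_2 = {2ja + j(j+1) + 1 : j ∈ [a+1]_0}, A_3 = {2ja + (j+1)(j+4) - 1 : j ∈ [a-1]_0}, A_4 = {2ja + j(j+7) + 4 : j ∈ [a-2]_0}. Then: (1) A_1 and A_4 consist of even numbers and A_2, A_3 consist of odd numbers; (2) A_2 ∩ A_3 = ∅; (3) A_1 ∩ A_4 = ∅ if and only if a ≢ 2 (mod 3). -/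
/-- For `a ≥ 3`, with `A₁ = {2ja + j(j-1) : j ∈ [a+2]₀}`,
`A₂ = {2ja + j(j+1) + 1 : j ∈ [a+1]₀}`, `A₃ = {2ja + (j+1)(j+4) - 1 : j ∈ [a-1]₀}`,
`A₄ = {2ja + j(j+7) + 4 : j ∈ [a-2]₀}`:
(1) `A₁` and `A₄` consist of even numbers, `A₂` and `A₃` of odd numbers;
(2) `A₂ ∩ A₃ = ∅`; (3) `A₁ ∩ A₄ = ∅` iff `a ≢ 2 (mod 3)`. -/
theorem stmt_14 (a : ℕ) (ha : 3 ≤ a)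
    (A1 A2 A3 A4 : Set ℤ)
    (hA1 : A1 = {x | ∃ j : ℤ, 0 ≤ j ∧ j ≤ (a : ℤ) + 2 ∧ x = 2 * j * a + j * (j - 1)})
    (hA2 : A2 = {x | ∃ j : ℤ, 0 ≤ j ∧ j ≤ (a : ℤ) + 1 ∧ x = 2 * j * a + j * (j + 1) + 1})
    (hA3 : A3 = {x | ∃ j : ℤ, 0 ≤ j ∧ j ≤ (a : ℤ) - 1 ∧
      x = 2 * j * a + (j + 1) * (j + 4) - 1})
    (hA4 : A4 = {x | ∃ j : ℤ, 0 ≤ j ∧ j ≤ (a : ℤ) - 2 ∧ x = 2 * j * a + j * (j + 7) + 4}) :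
    (∀ x ∈ A1 ∪ A4, Even x) ∧ (∀ x ∈ A2 ∪ A3, Odd x) ∧
      Disjoint A2 A3 ∧ (Disjoint A1 A4 ↔ a % 3 ≠ 2) := by
  subst hA1 hA2 hA3 hA4
  refine ⟨?_, ?_, ?_, ?_⟩
  · rintro x (⟨j, hj0, hj1, rfl⟩ | ⟨j, hj0, hj1, rfl⟩) <;>
      rcases Int.even_or_odd j with ⟨m, rfl⟩ | ⟨m, rfl⟩
    · exact ⟨2 * m * a + m * (2 * m - 1), by ring⟩
    · exact ⟨(2 * m + 1) * a + m * (2 * m + 1), by ring⟩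
    · exact ⟨2 * m * a + m * (2 * m + 7) + 2, by ring⟩
    · exact ⟨(2 * m + 1) * a + (m + 4) * (2 * m + 1) + 2, by ring⟩
  · rintro x (⟨j, hj0, hj1, rfl⟩ | ⟨j, hj0, hj1, rfl⟩) <;>
      rcases Int.even_or_odd j with ⟨m, rfl⟩ | ⟨m, rfl⟩
    · exact ⟨2 * m * a + m * (2 * m + 1), by ring⟩
    · exact ⟨(2 * m + 1) * a + (2 * m + 1) * (m + 1), by ring⟩
    · exact ⟨2 * m * a + (2 * m + 1) * (m + 2) - 1, by ring⟩
    · exact ⟨(2 * m + 1) * a + (m + 1) * (2 * m + 5) - 1, by ring⟩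
  · rw [Set.disjoint_left]
    rintro x ⟨j, hj0, hj1, rfl⟩ ⟨k, hk0, hk1, hx⟩
    have key : (j - k) * (2 * a + j + k + 1) = 4 * k + 2 := by linear_combination hx
    have h1 : 0 < j - k := by nlinarith [key]
    have h2 : j - k < 2 := by nlinarith [key]
    have h3 : j = k + 1 := by omega
    subst h3
    nlinarith [key]
  · constructor
    · intro hd ha2
      obtain ⟨m, rfl⟩ : ∃ m : ℕ, a = 3 * m + 2 := ⟨a / 3, by omega⟩
      have h1 : (2 * ((m : ℤ) + 1) * (3 * (m : ℤ) + 2) + ((m : ℤ) + 1) * (((m : ℤ) + 1) - 1) : ℤ)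
          ∈ {x : ℤ | ∃ j : ℤ, 0 ≤ j ∧ j ≤ ((3 * m + 2 : ℕ) : ℤ) + 2 ∧
            x = 2 * j * ((3 * m + 2 : ℕ) : ℤ) + j * (j - 1)} := by
        exact ⟨(m : ℤ) + 1, by positivity, by push_cast; linarith, by push_cast; ring⟩
      have h2 : (2 * ((m : ℤ) + 1) * (3 * (m : ℤ) + 2) + ((m : ℤ) + 1) * (((m : ℤ) + 1) - 1) : ℤ)
          ∈ {x : ℤ | ∃ j : ℤ, 0 ≤ j ∧ j ≤ ((3 * m + 2 : ℕ) : ℤ) - 2 ∧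
            x = 2 * j * ((3 * m + 2 : ℕ) : ℤ) + j * (j + 7) + 4} := by
        refine ⟨(m : ℤ), by positivity, by push_cast; linarith, by push_cast; ring⟩
      exact hd.ne_of_mem h1 h2 rfl
    · intro ha2
      rw [Set.disjoint_left]
      rintro x ⟨j, hj0, hj1, rfl⟩ ⟨k, hk0, hk1, hx⟩
      have key : (j - k) * (2 * a + j + k) = j + 7 * k + 4 := by linear_combination hx
      have h1 : 0 < j - k := by nlinarith [key]
      have h2 : j - k < 2 := by nlinarith [key]
      have h3 : j = k + 1 := by omega
      subst h3
      have h4 : 2 * (a : ℤ) = 6 * k + 4 := by nlinarith [key]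
      omega
end

section
/- Let a ≥ 3. The equation 2ka + k(k-1) = 2ja + j(j+7) + 4 with k ∈ [a+2]_0, j ∈ [a-2]_0 has a solution if and only if a ≡ 2 (mod 3); moreover, any solution satisfies k = j + 1 and a = 3j + 2. -/
lemma stmt_16_aux (a k j : ℕ) (ha : 3 ≤ a) (hj : j ≤ a - 2)
    (h : 2 * k * a + k * (k - 1) = 2 * j * a + j * (j + 7) + 4) :
    k = j + 1 ∧ a = 3 * j + 2 := by
  have hja : j + 2 ≤ a := by omega
  obtain _ | K := k
  · exfalso
    simp only [Nat.zero_sub, Nat.mul_zero, Nat.zero_mul, Nat.mul_zero] at h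
    nlinarith
  · have h' : 2 * (K + 1) * a + (K + 1) * K = 2 * j * a + j * (j + 7) + 4 := by
      simpa using h
    zify at h' hja ha ⊢
    have h1 : (K : ℤ) ≤ j := by
      by_contra hc
      push_neg at hc
      have hc' : (j : ℤ) + 1 ≤ K := by exact_mod_cast hc
      nlinarith [mul_nonneg (sub_nonneg.2 hc') (by positivity : (0:ℤ) ≤ (a:ℤ))]
    have h2 : (j : ℤ) ≤ K := by
      by_contra hc
      push_neg at hc
      have hc' : (K : ℤ) + 1 ≤ j := by exact_mod_cast hc
      nlinarith [mul_nonneg (sub_nonneg.2 hc') (by positivity : (0:ℤ) ≤ (a:ℤ))]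
    have hKj : (K : ℤ) = j := le_antisymm h1 h2
    constructor
    · have : K = j := by exact_mod_cast hKj
      omega
    · nlinarith

/-- For `a ≥ 3`, the equation `2ka + k(k-1) = 2ja + j(j+7) + 4` with `k ∈ [a+2]₀`,
`j ∈ [a-2]₀` has a solution iff `a ≡ 2 (mod 3)`; moreover every solution satisfies
`k = j + 1` and `a = 3j + 2`. -/
theorem stmt_16 (a : ℕ) (ha : 3 ≤ a) :
    ((∃ k j : ℕ, k ≤ a + 2 ∧ j ≤ a - 2 ∧
        2 * k * a + k * (k - 1) = 2 * j * a + j * (j + 7) + 4) ↔ a % 3 = 2) ∧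
    (∀ k j : ℕ, k ≤ a + 2 → j ≤ a - 2 →
      2 * k * a + k * (k - 1) = 2 * j * a + j * (j + 7) + 4 →
      k = j + 1 ∧ a = 3 * j + 2) := by
  constructor
  · constructor
    · rintro ⟨k, j, hk, hj, h⟩
      obtain ⟨-, rfl⟩ := stmt_16_aux a k j ha hj h
      omega
    · intro hmod
      refine ⟨(a - 2) / 3 + 1, (a - 2) / 3, by omega, by omega, ?_⟩
      have hae : a = 3 * ((a - 2) / 3) + 2 := by omega
      set j := (a - 2) / 3
      rw [hae]
      simp only [Nat.add_sub_cancel]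
      ring
  · intro k j _ hj h
    exact stmt_16_aux a k j ha hj h
end

section
/- Let G be a transmission irregular graph of order n whose three largest transmissions are attained at v_1, v_2, v_3 with Tr_G(v_1) > Tr_G(v_2) > Tr_G(v_3), and suppose v_1, v_2, v_3 lie on a pendant path v_4 v_3 v_2 v_1 (v_4 the root of degree ≥ 3, v_1 a pendant vertex, v_2 and v_3 of degree 2). Then the graph G + v_2v_4, obtained by adding the edge v_2 v_4, is also transmission irregular. -/
open SimpleGraph

lemma lip_walk {V : Type*} {H : SimpleGraph V} (f : V → ℤ)
    (hf : ∀ a b, H.Adj a b → f a ≤ f b + 1) {x y : V} (w : H.Walk x y) :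
    f x ≤ f y + w.length := by
  induction w with
  | nil => simp
  | cons h p ih =>
    have := hf _ _ h
    simp only [SimpleGraph.Walk.length_cons]
    push_cast
    omega

lemma lip_dist {V : Type*} {H : SimpleGraph V} (Hconn : H.Connected) (f : V → ℤ)
    (hf : ∀ a b, H.Adj a b → f a ≤ f b + 1) (x y : V) :
    f x ≤ f y + H.dist x y := by
  obtain ⟨p, hp⟩ := Hconn.exists_walk_length_eq_dist x y
  have := lip_walk f hf p
  omega

lemma exists_adj_dist {V : Type*} {G : SimpleGraph V} (hconn : G.Connected) {x u : V}
    (hne : x ≠ u) : ∃ w, G.Adj x w ∧ G.dist x u = G.dist w u + 1 := by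
  obtain ⟨p, hp⟩ := hconn.exists_walk_length_eq_dist x u
  cases p with
  | nil => exact absurd rfl hne
  | @cons _ w _ h q =>
    refine ⟨w, h, le_antisymm ?_ ?_⟩
    · have t := hconn.dist_triangle (u := x) (v := w) (w := u)
      have h1 : G.dist x w = 1 := SimpleGraph.dist_eq_one_iff_adj.mpr h
      omega
    · have h1 : G.dist w u ≤ q.length := SimpleGraph.dist_le q
      have h2 : q.length + 1 = G.dist x u := by simpa using hp
      omega

lemma pair_eq {V : Type*} {a b x y : V} (hxy : x ≠ y) (hx : x ∈ ({a, b} : Set V))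
    (hy : y ∈ ({a, b} : Set V)) : ({a, b} : Set V) = {x, y} := by
  simp only [Set.mem_insert_iff, Set.mem_singleton_iff] at hx hy
  rcases hx with rfl | rfl <;> rcases hy with rfl | rfl
  · exact absurd rfl hxy
  · rfl
  · exact Set.pair_comm _ _
  · exact absurd rfl hxy

/-- Let `G` be a connected transmission irregular graph whose three largest transmissions
are attained at `v₁ > v₂ > v₃`, lying on a pendant path `v₄ v₃ v₂ v₁` (with `v₁` a leaf,
`v₂, v₃` of degree 2 and root `v₄` of degree at least 3).  Then `G + v₂v₄` is
transmission irregular. -/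
theorem stmt_17 {V : Type*} [Fintype V] (G : SimpleGraph V) (hconn : G.Connected)
    (hTI : Function.Injective (transmission G))
    (v1 v2 v3 v4 : V)
    (h12 : transmission G v2 < transmission G v1)
    (h23 : transmission G v3 < transmission G v2)
    (hmax : ∀ z, z ≠ v1 → z ≠ v2 → z ≠ v3 → transmission G z < transmission G v3)
    (ha43 : G.Adj v4 v3) (ha32 : G.Adj v3 v2) (ha21 : G.Adj v2 v1)
    (hd1 : (G.neighborSet v1).ncard = 1)
    (hd2 : (G.neighborSet v2).ncard = 2)
    (hd3 : (G.neighborSet v3).ncard = 2)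
    (hd4 : 3 ≤ (G.neighborSet v4).ncard) :
    Function.Injective (transmission (G ⊔ SimpleGraph.fromEdgeSet {s(v2, v4)})) := by
  classical
  set H := G ⊔ SimpleGraph.fromEdgeSet {s(v2, v4)} with hH
  -- distinctness
  have ne21 : v2 ≠ v1 := ha21.ne
  have ne32 : v3 ≠ v2 := ha32.ne
  have ne43 : v4 ≠ v3 := ha43.ne
  have ne24 : v2 ≠ v4 := by
    intro h; rw [h] at hd2; omega
  -- neighbor sets
  have N1 : G.neighborSet v1 = {v2} := by
    obtain ⟨a, ha⟩ := Set.ncard_eq_one.mp hd1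
    have hv2 : v2 ∈ G.neighborSet v1 := ha21.symm
    rw [ha] at hv2 ⊢
    rw [Set.mem_singleton_iff] at hv2
    rw [hv2]
  have ne13 : v1 ≠ v3 := by
    intro h
    have : v4 ∈ G.neighborSet v1 := by rw [h]; exact ha43.symm
    rw [N1, Set.mem_singleton_iff] at this
    exact ne24 this.symm
  have ne14 : v1 ≠ v4 := by
    intro h
    have : v3 ∈ G.neighborSet v1 := by rw [h]; exact ha43
    rw [N1, Set.mem_singleton_iff] at this
    exact ne32 this
  have N2 : G.neighborSet v2 = {v1, v3} := by
    obtain ⟨a, b, hab, hset⟩ := Set.ncard_eq_two.mp hd2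
    rw [hset]
    exact pair_eq ne13 (hset ▸ (ha21 : v1 ∈ G.neighborSet v2))
      (hset ▸ (ha32.symm : v3 ∈ G.neighborSet v2))
  have N3 : G.neighborSet v3 = {v2, v4} := by
    obtain ⟨a, b, hab, hset⟩ := Set.ncard_eq_two.mp hd3
    rw [hset]
    exact pair_eq ne24 (hset ▸ (ha32 : v2 ∈ G.neighborSet v3))
      (hset ▸ (ha43.symm : v4 ∈ G.neighborSet v3))
  -- distance step lemmas in G
  have P1 : ∀ u, u ≠ v1 → G.dist v1 u = G.dist v2 u + 1 := by
    intro u hu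
    obtain ⟨w, hw, he⟩ := exists_adj_dist hconn (Ne.symm hu)
    have : w ∈ G.neighborSet v1 := hw
    rw [N1, Set.mem_singleton_iff] at this
    rw [this] at he; exact he
  have Q2 : ∀ u, u ≠ v1 → u ≠ v2 → G.dist v2 u = G.dist v3 u + 1 := by
    intro u hu1 hu2
    obtain ⟨w, hw, he⟩ := exists_adj_dist hconn (Ne.symm hu2)
    have : w ∈ G.neighborSet v2 := hw
    rw [N2, Set.mem_insert_iff, Set.mem_singleton_iff] at this
    rcases this with rfl | rfl
    · have := P1 u hu1; omega
    · exact he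
  have Q3 : ∀ u, u ≠ v1 → u ≠ v2 → u ≠ v3 → G.dist v3 u = G.dist v4 u + 1 := by
    intro u hu1 hu2 hu3
    obtain ⟨w, hw, he⟩ := exists_adj_dist hconn (Ne.symm hu3)
    have : w ∈ G.neighborSet v3 := hw
    rw [N3, Set.mem_insert_iff, Set.mem_singleton_iff] at this
    rcases this with rfl | rfl
    · have := Q2 u hu1 hu2; omega
    · exact he
  have L2 : ∀ u, u ≠ v1 → u ≠ v2 → u ≠ v3 → G.dist v2 u = G.dist v4 u + 2 := by
    intro u h1 h2 h3; have := Q2 u h1 h2; have := Q3 u h1 h2 h3; omega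
  have L1 : ∀ u, u ≠ v1 → u ≠ v2 → u ≠ v3 → G.dist v1 u = G.dist v4 u + 3 := by
    intro u h1 h2 h3; have := P1 u h1; have := L2 u h1 h2 h3; omega
  -- H basics
  have hGH : G ≤ H := le_sup_left
  have HAdj : ∀ a b, H.Adj a b ↔ G.Adj a b ∨ (a = v2 ∧ b = v4) ∨ (a = v4 ∧ b = v2) := by
    intro a b
    rw [hH]
    simp only [SimpleGraph.sup_adj, SimpleGraph.fromEdgeSet_adj, Set.mem_singleton_iff,
      Sym2.eq_iff]
    constructor
    · rintro (h | ⟨(⟨rfl, rfl⟩ | ⟨rfl, rfl⟩), hne⟩) <;> tauto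
    · rintro (h | ⟨rfl, rfl⟩ | ⟨rfl, rfl⟩)
      · exact Or.inl h
      · exact Or.inr ⟨Or.inl ⟨rfl, rfl⟩, ne24⟩
      · exact Or.inr ⟨Or.inr ⟨rfl, rfl⟩, ne24.symm⟩
  have Hconn : H.Connected := hconn.mono hGH
  have Hdist_le : ∀ x y, H.dist x y ≤ G.dist x y := by
    intro x y
    exact (hconn.preconnected x y).dist_anti hGH
  have h24' : H.Adj v2 v4 := (HAdj v2 v4).mpr (Or.inr (Or.inl ⟨rfl, rfl⟩))
  have h32' : H.Adj v3 v2 := hGH ha32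
  have h21' : H.Adj v2 v1 := hGH ha21
  -- lower bound via Lipschitz
  have Hlb : ∀ u, u ≠ v1 → u ≠ v2 → u ≠ v3 → ∀ x,
      (G.dist x u : ℤ) - (if x = v1 ∨ x = v2 then 1 else 0) ≤ (H.dist x u : ℤ) := by
    intro u hu1 hu2 hu3 x
    set f : V → ℤ := fun x => (G.dist x u : ℤ) - (if x = v1 ∨ x = v2 then 1 else 0) with hf
    have e0 : ∀ x, x ≠ v1 → x ≠ v2 → f x = (G.dist x u : ℤ) := by
      intro x hx1 hx2; simp [hf, hx1, hx2]
    have ev1 : f v1 = (G.dist v1 u : ℤ) - 1 := by simp [hf]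
    have ev2 : f v2 = (G.dist v2 u : ℤ) - 1 := by simp [hf]
    have fle : ∀ x, f x ≤ (G.dist x u : ℤ) := by
      intro x; simp only [hf]; split_ifs <;> omega
    have hlip : ∀ a b, H.Adj a b → f a ≤ f b + 1 := by
      intro a b hab
      rcases (HAdj a b).mp hab with h | ⟨ha', hb'⟩ | ⟨ha', hb'⟩
      · have tri : G.dist a u ≤ G.dist b u + 1 := by
          have t := hconn.dist_triangle (u := a) (v := b) (w := u)
          have h1 : G.dist a b = 1 := SimpleGraph.dist_eq_one_iff_adj.mpr h
          omega
        by_cases hb1 : b = v1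
        · have haa : a = v2 := by
            have : a ∈ G.neighborSet v1 := by rw [← hb1]; exact h.symm
            rwa [N1, Set.mem_singleton_iff] at this
          rw [haa, hb1, ev1, ev2]
          have := P1 u hu1
          omega
        · by_cases hb2 : b = v2
          · have haa : a ∈ G.neighborSet v2 := by rw [← hb2]; exact h.symm
            rw [N2, Set.mem_insert_iff, Set.mem_singleton_iff] at haa
            rcases haa with haa | haa
            · rw [haa, hb2, ev1, ev2]
              have := P1 u hu1
              omega
            · rw [haa, hb2, e0 v3 ne13.symm ne32, ev2]
              have := Q2 u hu1 hu2
              omega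
          · rw [e0 b hb1 hb2]
            have h1 := fle a
            omega
      · rw [ha', hb', ev2, e0 v4 ne14.symm ne24.symm]
        have := L2 u hu1 hu2 hu3
        omega
      · rw [ha', hb', ev2, e0 v4 ne14.symm ne24.symm]
        have := L2 u hu1 hu2 hu3
        omega
    have := lip_dist Hconn f hlip x u
    have hfu : f u = 0 := by
      simp only [hf]
      rw [if_neg (by rintro (h | h); exacts [hu1 h, hu2 h])]
      simp [SimpleGraph.dist_self]
    rw [hfu] at this
    simpa [hf] using this
  -- exact H-distance formulas for u outside the path
  have DA : ∀ u, u ≠ v1 → u ≠ v2 → u ≠ v3 → ∀ x, x ≠ v1 → x ≠ v2 →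
      H.dist x u = G.dist x u := by
    intro u hu1 hu2 hu3 x hx1 hx2
    have hle := Hdist_le x u
    have hlb := Hlb u hu1 hu2 hu3 x
    rw [if_neg (by rintro (h | h); exacts [hx1 h, hx2 h])] at hlb
    omega
  have D2 : ∀ u, u ≠ v1 → u ≠ v2 → u ≠ v3 → H.dist v2 u = G.dist v4 u + 1 := by
    intro u hu1 hu2 hu3
    have hlb := Hlb u hu1 hu2 hu3 v2
    rw [if_pos (Or.inr rfl)] at hlb
    have hup : H.dist v2 u ≤ G.dist v4 u + 1 := by
      have t := Hconn.dist_triangle (u := v2) (v := v4) (w := u)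
      have h1 : H.dist v2 v4 = 1 := SimpleGraph.dist_eq_one_iff_adj.mpr h24'
      have h2 := Hdist_le v4 u
      omega
    have := L2 u hu1 hu2 hu3
    omega
  have D1 : ∀ u, u ≠ v1 → u ≠ v2 → u ≠ v3 → H.dist v1 u = G.dist v4 u + 2 := by
    intro u hu1 hu2 hu3
    have hlb := Hlb u hu1 hu2 hu3 v1
    rw [if_pos (Or.inl rfl)] at hlb
    have hup : H.dist v1 u ≤ G.dist v4 u + 2 := by
      have t := Hconn.dist_triangle (u := v1) (v := v2) (w := u)
      have h1 : H.dist v1 v2 = 1 := SimpleGraph.dist_eq_one_iff_adj.mpr h21'.symm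
      have h2 := D2 u hu1 hu2 hu3
      omega
    have := L1 u hu1 hu2 hu3
    omega
  have D3 : ∀ u, u ≠ v1 → u ≠ v2 → u ≠ v3 → H.dist v3 u = G.dist v4 u + 1 := by
    intro u hu1 hu2 hu3
    rw [DA u hu1 hu2 hu3 v3 ne13.symm ne32]
    exact Q3 u hu1 hu2 hu3
  -- special distances
  have h'12 : H.dist v1 v2 = 1 := SimpleGraph.dist_eq_one_iff_adj.mpr h21'.symm
  have h'23 : H.dist v2 v3 = 1 := SimpleGraph.dist_eq_one_iff_adj.mpr h32'.symm
  have h'13 : H.dist v1 v3 = 2 := by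
    have hnadj : ¬ H.Adj v1 v3 := by
      intro hc
      rcases (HAdj _ _).mp hc with h | ⟨h, _⟩ | ⟨h, _⟩
      · have : v3 ∈ G.neighborSet v1 := h
        rw [N1, Set.mem_singleton_iff] at this
        exact ne32 this
      · exact ne21 h.symm
      · exact ne14 h
    have h0 : H.dist v1 v3 ≠ 0 := fun hc => ne13 (Hconn.dist_eq_zero_iff.mp hc)
    have h1 : H.dist v1 v3 ≠ 1 := fun hc => hnadj (SimpleGraph.dist_eq_one_iff_adj.mp hc)
    have h2 : H.dist v1 v3 ≤ 2 := by
      have t := Hconn.dist_triangle (u := v1) (v := v2) (w := v3)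
      omega
    omega
  have g23 : G.dist v2 v3 = 1 := SimpleGraph.dist_eq_one_iff_adj.mpr ha32.symm
  have g13 : G.dist v1 v3 = 2 := by
    have := P1 v3 ne13.symm
    omega
  -- transmission computations
  set T : Finset V := {v1, v2, v3} with hT
  set A : Finset V := Finset.univ \ T with hA
  have hmemA : ∀ u, u ∈ A ↔ u ≠ v1 ∧ u ≠ v2 ∧ u ≠ v3 := by
    intro u
    simp [hA, hT, not_or]
  have split : ∀ (g : V → ℕ), ∑ u : V, g u = ∑ u ∈ A, g u + (g v1 + g v2 + g v3) := by
    intro g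
    rw [← Finset.sum_sdiff (Finset.subset_univ T), ← hA]
    congr 1
    rw [hT]
    rw [Finset.sum_insert (by simp [ne21.symm, ne13]),
      Finset.sum_insert (by simp [ne32.symm]), Finset.sum_singleton]
    ring
  set S : ℕ := ∑ u ∈ A, G.dist v4 u with hS
  set m : ℕ := A.card with hm
  have hm1 : 1 ≤ m := by
    rw [hm]
    refine Finset.card_pos.mpr ⟨v4, ?_⟩
    rw [hmemA]
    exact ⟨ne14.symm, ne24.symm, ne43⟩
  have sumA : ∀ (g : V → ℕ) (c : ℕ), (∀ u ∈ A, g u = G.dist v4 u + c) →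
      ∑ u ∈ A, g u = S + c * m := by
    intro g c hg
    rw [Finset.sum_congr rfl hg, Finset.sum_add_distrib, Finset.sum_const, smul_eq_mul, hS, hm,
      mul_comm]
  have TH1 : transmission H v1 = S + 2 * m + 3 := by
    rw [transmission, split]
    rw [sumA _ 2 (fun u hu => by rw [hmemA] at hu; exact D1 u hu.1 hu.2.1 hu.2.2)]
    rw [SimpleGraph.dist_self, h'12, h'13]
  have TH2 : transmission H v2 = S + m + 2 := by
    rw [transmission, split]
    rw [sumA _ 1 (fun u hu => by rw [hmemA] at hu; exact D2 u hu.1 hu.2.1 hu.2.2)]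
    rw [SimpleGraph.dist_self, SimpleGraph.dist_comm (u := v2) (v := v1), h'12, h'23]
    omega
  have TH3 : transmission H v3 = S + m + 3 := by
    rw [transmission, split]
    rw [sumA _ 1 (fun u hu => by rw [hmemA] at hu; exact D3 u hu.1 hu.2.1 hu.2.2)]
    rw [SimpleGraph.dist_self, SimpleGraph.dist_comm (u := v3) (v := v1), h'13,
      SimpleGraph.dist_comm (u := v3) (v := v2), h'23]
    omega
  have TG3 : transmission G v3 = S + m + 3 := by
    rw [transmission, split]
    rw [sumA _ 1 (fun u hu => by rw [hmemA] at hu; exact Q3 u hu.1 hu.2.1 hu.2.2)]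
    rw [SimpleGraph.dist_self, SimpleGraph.dist_comm (u := v3) (v := v1), g13,
      SimpleGraph.dist_comm (u := v3) (v := v2), g23]
    omega
  have TA : ∀ x, x ≠ v1 → x ≠ v2 → x ≠ v3 → transmission H x + 2 = transmission G x := by
    intro x hx1 hx2 hx3
    rw [transmission, transmission, split, split]
    have hsum : ∑ u ∈ A, H.dist x u = ∑ u ∈ A, G.dist x u := by
      refine Finset.sum_congr rfl fun u hu => ?_
      rw [hmemA] at hu
      exact DA u hu.1 hu.2.1 hu.2.2 x hx1 hx2
    have e1 : H.dist x v1 + 1 = G.dist x v1 := by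
      rw [SimpleGraph.dist_comm (u := x) (v := v1), SimpleGraph.dist_comm (u := x) (v := v1),
        D1 x hx1 hx2 hx3, L1 x hx1 hx2 hx3]
    have e2 : H.dist x v2 + 1 = G.dist x v2 := by
      rw [SimpleGraph.dist_comm (u := x) (v := v2), SimpleGraph.dist_comm (u := x) (v := v2),
        D2 x hx1 hx2 hx3, L2 x hx1 hx2 hx3]
    have e3 : H.dist x v3 = G.dist x v3 := by
      rw [SimpleGraph.dist_comm (u := x) (v := v3), SimpleGraph.dist_comm (u := x) (v := v3),
        D3 x hx1 hx2 hx3, Q3 x hx1 hx2 hx3]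
    omega
  have key : ∀ x, x ≠ v1 → x ≠ v2 → x ≠ v3 → transmission H x + 2 < S + m + 3 := by
    intro x hx1 hx2 hx3
    have h1 := hmax x hx1 hx2 hx3
    have h2 := TA x hx1 hx2 hx3
    omega
  -- final injectivity
  intro x y hxy
  change transmission H x = transmission H y at hxy
  rcases eq_or_ne x v1 with hx | hx1 <;> rcases eq_or_ne y v1 with hy | hy1
  · rw [hx, hy]
  · rw [hx] at hxy
    rcases eq_or_ne y v2 with hy | hy2
    · rw [hy] at hxy; rw [TH1, TH2] at hxy; omega
    · rcases eq_or_ne y v3 with hy | hy3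
      · rw [hy] at hxy; rw [TH1, TH3] at hxy; omega
      · have := key y hy1 hy2 hy3; rw [TH1] at hxy; omega
  · rw [hy] at hxy
    rcases eq_or_ne x v2 with hx | hx2
    · rw [hx] at hxy; rw [TH1, TH2] at hxy; omega
    · rcases eq_or_ne x v3 with hx | hx3
      · rw [hx] at hxy; rw [TH1, TH3] at hxy; omega
      · have := key x hx1 hx2 hx3; rw [TH1] at hxy; omega
  · rcases eq_or_ne x v2 with hx | hx2 <;> rcases eq_or_ne y v2 with hy | hy2
    · rw [hx, hy]
    · rw [hx] at hxy
      rcases eq_or_ne y v3 with hy | hy3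
      · rw [hy] at hxy; rw [TH2, TH3] at hxy; omega
      · have := key y hy1 hy2 hy3; rw [TH2] at hxy; omega
    · rw [hy] at hxy
      rcases eq_or_ne x v3 with hx | hx3
      · rw [hx] at hxy; rw [TH2, TH3] at hxy; omega
      · have := key x hx1 hx2 hx3; rw [TH2] at hxy; omega
    · rcases eq_or_ne x v3 with hx | hx3 <;> rcases eq_or_ne y v3 with hy | hy3
      · rw [hx, hy]
      · rw [hx] at hxy
        have := key y hy1 hy2 hy3; rw [TH3] at hxy; omega
      · rw [hy] at hxy
        have := key x hx1 hx2 hx3; rw [TH3] at hxy; omega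
      · apply hTI
        have t1 := TA x hx1 hx2 hx3
        have t2 := TA y hy1 hy2 hy3
        omega
end
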